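/- For every k ≥ 0, there exists a Boolean function f on n = 2k+1 variables with s(f) = bs(f) = n and UC_1(f) ≤ k+1. Concretely, let p_i (for 0 ≤ i ≤ 2k) be the cyclic shifts of the pattern 0^k 1 *^k, and define f(x) = 1 iff some p_i ⊆ x. Then (a) the p_i are pairwise inconsistent, forming an unambiguous collection of 1-certificates of size k+1; (b) f(0^n) = 0 and f(e_i) = 1 for every standard basis vector e_i, so the all-zeros input has sensitivity n. -/

import Mathlib

/-- Flip the bits of `x` in the block `B`. -/
def flipB {n : ℕ} (x : Fin n → Bool) (B : Finset (Fin n)) : Fin n → Bool :=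
  fun i => if i ∈ B then !(x i) else x i

/-- A partial assignment `p` is consistent with an input `x`. -/
def Consistent {n : ℕ} (p : Fin n → Option Bool) (x : Fin n → Bool) : Prop :=
  ∀ i b, p i = some b → x i = b

/-- Number of non-`*` entries of a partial assignment. -/
def suppCard {n : ℕ} (p : Fin n → Option Bool) : ℕ :=
  (Finset.univ.filter fun i => p i ≠ none).card

/-- `U` is an unambiguous collection of `b`-certificates for `f`. -/
def UnambColl {n : ℕ} (f : (Fin n → Bool) → Bool) (b : Bool)
    (U : Set (Fin n → Option Bool)) : Prop :=
  (∀ p ∈ U, ∀ y, Consistent p y → f y = b) ∧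
  (∀ x, f x = b → ∃ p ∈ U, Consistent p x) ∧
  (∀ p ∈ U, ∀ q ∈ U, p ≠ q → ¬∃ y, Consistent p y ∧ Consistent q y)

/-- Unambiguous certificate complexity for the value `b`. -/
noncomputable def UC {n : ℕ} (f : (Fin n → Bool) → Bool) (b : Bool) : ℕ :=
  sInf {m : ℕ | ∃ U, UnambColl f b U ∧ ∀ p ∈ U, suppCard p ≤ m}

/-- Sensitivity of `f`. -/
noncomputable def sF {n : ℕ} (f : (Fin n → Bool) → Bool) : ℕ :=
  sSup {m : ℕ | ∃ x : Fin n → Bool,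
    m = (Finset.univ.filter fun i : Fin n => f (flipB x {i}) ≠ f x).card}

/-- Block sensitivity of `f`. -/
noncomputable def bsF {n : ℕ} (f : (Fin n → Bool) → Bool) : ℕ :=
  sSup {k : ℕ | ∃ (x : Fin n → Bool) (B : Fin k → Finset (Fin n)),
    (∀ j, f (flipB x (B j)) ≠ f x) ∧
    ∀ j j', j ≠ j' → Disjoint (B j) (B j')}

/-- The base pattern `0^k 1 *^k`. -/
def pat (k : ℕ) : Fin (2 * k + 1) → Option Bool :=
  fun j => if (j : ℕ) < k then some false
    else if (j : ℕ) = k then some true else none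

/-- The `i`-th cyclic shift of the pattern `0^k 1 *^k`. -/
def patShift (k : ℕ) (i : Fin (2 * k + 1)) : Fin (2 * k + 1) → Option Bool :=
  fun j => pat k (j + i)

/-- The function `f(x) = 1` iff some cyclic shift `p_i` satisfies `p_i ⊆ x`. -/
def fCyc (k : ℕ) : (Fin (2 * k + 1) → Bool) → Bool :=
  fun x => decide (∃ i, ∀ j b, patShift k i j = some b → x j = b)

namespace TightAux

variable (k : ℕ)

/-- The element `k` of `Fin (2k+1)`. -/
def K (k : ℕ) : Fin (2 * k + 1) := ⟨k, by omega⟩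

lemma pat_eq_true (m : Fin (2 * k + 1)) : pat k m = some true ↔ m = K k := by
  unfold pat K
  rw [Fin.ext_iff]
  split_ifs with h1 h2 <;> simp <;> omega

lemma pat_eq_false (m : Fin (2 * k + 1)) : pat k m = some false ↔ (m : ℕ) < k := by
  unfold pat
  split_ifs with h1 h2 <;> simp <;> omega

lemma pat_ne_none (m : Fin (2 * k + 1)) : pat k m ≠ none ↔ (m : ℕ) ≤ k := by
  unfold pat
  split_ifs with h1 h2 <;> simp <;> omega

lemma shift_true (i j : Fin (2 * k + 1)) :
    patShift k i j = some true ↔ j + i = K k := by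
  unfold patShift; exact pat_eq_true k _

lemma shift_false (i j : Fin (2 * k + 1)) :
    patShift k i j = some false ↔ ((j + i : Fin (2 * k + 1)) : ℕ) < k := by
  unfold patShift; exact pat_eq_false k _

lemma one_pos (i : Fin (2 * k + 1)) : patShift k i (K k - i) = some true := by
  rw [shift_true]; abel

lemma pairwise_incons (i i' : Fin (2 * k + 1)) (h : i ≠ i') :
    ¬∃ y, Consistent (patShift k i) y ∧ Consistent (patShift k i') y := by
  rintro ⟨y, hy, hy'⟩
  set j : Fin (2 * k + 1) := K k - i with hj
  set j' : Fin (2 * k + 1) := K k - i' with hj'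
  have hji : j + i = K k := by rw [hj]; abel
  have hji' : j' + i' = K k := by rw [hj']; abel
  have hyj : y j = true := hy j true (one_pos k i)
  have hyj' : y j' = true := hy' j' true (one_pos k i')
  set u : ℕ := ((j + i' : Fin (2 * k + 1)) : ℕ) with hu
  set v : ℕ := ((j' + i : Fin (2 * k + 1)) : ℕ) with hv
  have hun : u ≠ k := by
    intro hk
    have : j + i' = K k := by rw [Fin.ext_iff]; exact hk
    rw [← hji] at this
    exact h (add_left_cancel this).symm
  have hvn : v ≠ k := by
    intro hk
    have : j' + i = K k := by rw [Fin.ext_iff]; exact hk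
    rw [← hji'] at this
    exact h (add_left_cancel this)
  have hsum : (j + i') + (j' + i) = K k + K k := by
    have : (j + i') + (j' + i) = (j + i) + (j' + i') := by abel
    rw [this, hji, hji']
  have hsval : (u + v) % (2 * k + 1) = 2 * k := by
    have h0 : (u + v) % (2 * k + 1) = ((j + i') + (j' + i) : Fin (2 * k + 1)).val :=
      (Fin.val_add _ _).symm
    rw [h0, hsum, Fin.val_add]
    show (k + k) % (2 * k + 1) = 2 * k
    rw [Nat.mod_eq_of_lt (by omega)]
    omega
  have hult : u < 2 * k + 1 := (j + i').isLt
  have hvlt : v < 2 * k + 1 := (j' + i).isLt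
  have hsum2 : u + v = 2 * k := by
    rcases Nat.lt_or_ge (u + v) (2 * k + 1) with hc | hc
    · rwa [Nat.mod_eq_of_lt hc] at hsval
    · rw [Nat.mod_eq_sub_mod hc, Nat.mod_eq_of_lt (by omega)] at hsval
      omega
  have key : u < k ∨ v < k := by omega
  rcases key with hk1 | hk2
  · have : y j = false := hy' j false ((shift_false k i' j).mpr hk1)
    rw [hyj] at this; exact Bool.noConfusion this
  · have : y j' = false := hy j' false ((shift_false k i j').mpr hk2)
    rw [hyj'] at this; exact Bool.noConfusion this

lemma supp (i : Fin (2 * k + 1)) : suppCard (patShift k i) = k + 1 := by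
  unfold suppCard
  have h1 : (Finset.univ.filter fun j : Fin (2 * k + 1) => patShift k i j ≠ none)
      = Finset.univ.filter fun j : Fin (2 * k + 1) =>
        ((j + i : Fin (2 * k + 1)) : ℕ) ≤ k := by
    apply Finset.filter_congr
    intro j _
    exact pat_ne_none k _
  rw [h1]
  have h2 : (Finset.univ.filter fun j : Fin (2 * k + 1) =>
        ((j + i : Fin (2 * k + 1)) : ℕ) ≤ k)
      = Finset.image (fun m : Fin (2 * k + 1) => m - i)
        (Finset.univ.filter fun m : Fin (2 * k + 1) => (m : ℕ) ≤ k) := by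
    ext j
    simp only [Finset.mem_filter, Finset.mem_univ, true_and, Finset.mem_image]
    constructor
    · intro hjle
      exact ⟨j + i, hjle, by abel⟩
    · rintro ⟨m, hm, rfl⟩
      have : m - i + i = m := by abel
      rwa [this]
  rw [h2, Finset.card_image_of_injective _ sub_left_injective]
  have h3 : (Finset.univ.filter fun m : Fin (2 * k + 1) => (m : ℕ) ≤ k)
      = Finset.univ.map (Fin.castLEEmb (by omega : k + 1 ≤ 2 * k + 1)) := by
    ext m
    simp only [Finset.mem_filter, Finset.mem_univ, true_and, Finset.mem_map,
      Fin.castLEEmb, Function.Embedding.coeFn_mk]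
    constructor
    · intro hm
      exact ⟨⟨(m : ℕ), by omega⟩, by simp [Fin.castLE, Fin.ext_iff]⟩
    · rintro ⟨a, rfl⟩
      simpa [Fin.castLE] using Nat.lt_succ_iff.mp a.isLt
  rw [h3, Finset.card_map, Finset.card_univ, Fintype.card_fin]

lemma fCyc_iff (x : Fin (2 * k + 1) → Bool) :
    fCyc k x = true ↔ ∃ i, Consistent (patShift k i) x := by
  unfold fCyc Consistent
  exact decide_eq_true_iff

lemma fCyc_zero : fCyc k (fun _ => false) = false := by
  rw [← Bool.not_eq_true, fCyc_iff]
  rintro ⟨i, hi⟩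
  exact Bool.noConfusion (hi (K k - i) true (one_pos k i))

lemma fCyc_basis (i : Fin (2 * k + 1)) :
    fCyc k (flipB (fun _ => false) {i}) = true := by
  rw [fCyc_iff]
  refine ⟨K k - i, ?_⟩
  intro j b hb
  cases b with
  | true =>
    have h1 : j + (K k - i) = K k := (shift_true k _ j).mp hb
    have hj : j = i := by
      have : j + (K k - i) = i + (K k - i) := by rw [h1]; abel
      exact add_right_cancel this
    simp [flipB, hj]
  | false =>
    have h1 : ((j + (K k - i) : Fin (2 * k + 1)) : ℕ) < k := (shift_false k _ j).mp hb
    have hj : j ≠ i := by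
      rintro rfl
      have : j + (K k - j) = K k := by abel
      rw [this] at h1
      exact absurd h1 (by simp [K])
    simp [flipB, hj]

lemma sF_eq : sF (fCyc k) = 2 * k + 1 := by
  have hub : ∀ m ∈ {m : ℕ | ∃ x : Fin (2 * k + 1) → Bool,
      m = (Finset.univ.filter fun i : Fin (2 * k + 1) =>
        fCyc k (flipB x {i}) ≠ fCyc k x).card}, m ≤ 2 * k + 1 := by
    rintro m ⟨x, rfl⟩
    exact (Finset.card_filter_le _ _).trans (by simp)
  have hmem : (2 * k + 1) ∈ {m : ℕ | ∃ x : Fin (2 * k + 1) → Bool,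
      m = (Finset.univ.filter fun i : Fin (2 * k + 1) =>
        fCyc k (flipB x {i}) ≠ fCyc k x).card} := by
    refine ⟨fun _ => false, ?_⟩
    rw [Finset.filter_true_of_mem, Finset.card_univ, Fintype.card_fin]
    intro i _
    rw [fCyc_basis k i, fCyc_zero k]
    simp
  exact le_antisymm (csSup_le ⟨_, hmem⟩ hub) (le_csSup ⟨2 * k + 1, hub⟩ hmem)

lemma bsF_eq : bsF (fCyc k) = 2 * k + 1 := by
  have hub : ∀ m ∈ {m : ℕ | ∃ (x : Fin (2 * k + 1) → Bool)
      (B : Fin m → Finset (Fin (2 * k + 1))),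
      (∀ j, fCyc k (flipB x (B j)) ≠ fCyc k x) ∧
      ∀ j j', j ≠ j' → Disjoint (B j) (B j')}, m ≤ 2 * k + 1 := by
    rintro m ⟨x, B, hB, hdisj⟩
    have hne : ∀ j, (B j).Nonempty := by
      intro j
      rw [Finset.nonempty_iff_ne_empty]
      intro he
      apply hB j
      rw [he, show flipB x ∅ = x from funext fun t => by simp [flipB]]
    have hinj : Function.Injective (fun j => (hne j).choose) := by
      intro a b hab
      by_contra hab2
      have hd := hdisj a b hab2
      have h1 := (hne a).choose_spec
      have h2 := (hne b).choose_spec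
      simp only at hab
      rw [hab] at h1
      exact Finset.disjoint_left.mp hd h1 h2
    have := Fintype.card_le_of_injective _ hinj
    simpa using this
  have hmem : (2 * k + 1) ∈ {m : ℕ | ∃ (x : Fin (2 * k + 1) → Bool)
      (B : Fin m → Finset (Fin (2 * k + 1))),
      (∀ j, fCyc k (flipB x (B j)) ≠ fCyc k x) ∧
      ∀ j j', j ≠ j' → Disjoint (B j) (B j')} := by
    refine ⟨fun _ => false, fun j => {j}, ?_, ?_⟩
    · intro j
      rw [fCyc_basis k j, fCyc_zero k]
      simp
    · intro j j' hjj'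
      simpa using hjj'
  exact le_antisymm (csSup_le ⟨_, hmem⟩ hub) (le_csSup ⟨2 * k + 1, hub⟩ hmem)

end TightAux

/-- A function on `n = 2k+1` variables with `s(f) = bs(f) = n` while
`UC_1(f) ≤ k + 1`: the tightness example for `bs(f) ≤ 2·UC_min(f) - 1`. -/
theorem tightness_example (k : ℕ) :
    (∀ i i' : Fin (2 * k + 1), i ≠ i' →
      ¬∃ y, Consistent (patShift k i) y ∧ Consistent (patShift k i') y) ∧
    (∀ i, suppCard (patShift k i) = k + 1) ∧
    (∀ i, ∀ y, Consistent (patShift k i) y → fCyc k y = true) ∧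
    (∀ y, fCyc k y = true → ∃ i, Consistent (patShift k i) y) ∧
    UnambColl (fCyc k) true {p | ∃ i, p = patShift k i} ∧
    UC (fCyc k) true ≤ k + 1 ∧
    fCyc k (fun _ => false) = false ∧
    (∀ i : Fin (2 * k + 1), fCyc k (flipB (fun _ => false) {i}) = true) ∧
    sF (fCyc k) = 2 * k + 1 ∧
    bsF (fCyc k) = 2 * k + 1 := by
  open TightAux in
  have hcov : ∀ y, fCyc k y = true → ∃ i, Consistent (patShift k i) y :=
    fun y => (fCyc_iff k y).mp
  have hcert : ∀ i, ∀ y, Consistent (patShift k i) y → fCyc k y = true :=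
    fun i y h => (fCyc_iff k y).mpr ⟨i, h⟩
  have hunamb : UnambColl (fCyc k) true {p | ∃ i, p = patShift k i} := by
    refine ⟨?_, ?_, ?_⟩
    · rintro p ⟨i, rfl⟩ y hy
      exact hcert i y hy
    · intro x hx
      obtain ⟨i, hi⟩ := hcov x hx
      exact ⟨patShift k i, ⟨i, rfl⟩, hi⟩
    · rintro p ⟨i, rfl⟩ q ⟨i', rfl⟩ hpq
      exact pairwise_incons k i i' (fun h => hpq (by rw [h]))
  refine ⟨pairwise_incons k, supp k, hcert, hcov, hunamb, ?_, fCyc_zero k,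
    fCyc_basis k, sF_eq k, bsF_eq k⟩
  exact Nat.sInf_le ⟨_, hunamb, by rintro p ⟨i, rfl⟩; exact (supp k i).le⟩
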